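/- (Non-expansivity of the scattering transform) Under the Parseval condition Σ_{j=0}^J |γ_j(r)|² = 1 for all r, the scattering transform satisfies Σ_{m=0}^∞ Σ_{p∈{1,…,J}^m} ‖S[p]f‖² ≤ ‖f‖² for all f ∈ L²(G). -/

import Mathlib

open scoped BigOperators
open MeasureTheory

noncomputable def conv {G : Type*} [Group G] [Fintype G] (f g : G → ℂ) : G → ℂ :=
  fun x => (Fintype.card G : ℂ)⁻¹ * ∑ y, f y * g (y⁻¹ * x)

noncomputable def nsq {G : Type*} [Fintype G] (f : G → ℂ) : ℝ :=
  (Fintype.card G : ℝ)⁻¹ * ∑ x, Complex.normSq (f x)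

noncomputable def ip {G : Type*} [Fintype G] (f g : G → ℂ) : ℂ :=
  (Fintype.card G : ℂ)⁻¹ * ∑ x, f x * (starRingEnd ℂ) (g x)

noncomputable def gwavelet {G : Type*} [Group G] {k : ℕ} (d : Fin k → ℕ)
    (π : (r : Fin k) → G →* Matrix (Fin (d r)) (Fin (d r)) ℂ)
    (γ : Fin k → ℂ) : G → ℂ :=
  fun x => ∑ r, (d r : ℂ) * γ r * Matrix.trace (π r x)

noncomputable def Upath {G : Type*} [Group G] [Fintype G] {J : ℕ}
    (ψ : Fin J → G → ℂ) : List (Fin J) → (G → ℂ) → G → ℂ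
  | [], f => f
  | j :: p, f => Upath ψ p fun x => ((‖conv (ψ j) f x‖ : ℝ) : ℂ)

noncomputable def Sop {G : Type*} [Group G] [Fintype G] {k J : ℕ} (d : Fin k → ℕ)
    (π : (r : Fin k) → G →* Matrix (Fin (d r)) (Fin (d r)) ℂ)
    (γ : Fin (J + 1) → Fin k → ℂ) (p : List (Fin J)) (f : G → ℂ) : G → ℂ :=
  conv (gwavelet d π (γ 0)) (Upath (fun j => gwavelet d π (γ j.succ)) p f)

set_option linter.unusedSectionVars false


section SchurAux

variable {G : Type*} [Group G] [Fintype G] {k : ℕ} {d : Fin k → ℕ}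
  {π : (r : Fin k) → G →* Matrix (Fin (d r)) (Fin (d r)) ℂ}

lemma star_eq_inv (hunit : ∀ r x, π r x ∈ Matrix.unitaryGroup (Fin (d r)) ℂ)
    (r : Fin k) (x : G) : star (π r x) = π r x⁻¹ := by
  have h1 : star (π r x) * π r x = 1 := (Unitary.mem_iff.mp (hunit r x)).1
  have h2 : π r x * π r x⁻¹ = 1 := by rw [← map_mul, mul_inv_cancel, map_one]
  exact left_inv_eq_right_inv h1 h2

lemma avg_intertwines (r s : Fin k) (T : Matrix (Fin (d r)) (Fin (d s)) ℂ) (y : G) :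
    π r y * (∑ x : G, π r x * T * π s x⁻¹) = (∑ x : G, π r x * T * π s x⁻¹) * π s y := by
  simp only [Matrix.mul_sum, Matrix.sum_mul]
  refine Fintype.sum_equiv (Equiv.mulLeft y) _ _ fun x => ?_
  simp only [Equiv.coe_mulLeft, mul_inv_rev, map_mul, Matrix.mul_assoc]
  rw [← map_mul, inv_mul_cancel, map_one, mul_one]

lemma avg_entry (hunit : ∀ r x, π r x ∈ Matrix.unitaryGroup (Fin (d r)) ℂ)
    (r s : Fin k) (j : Fin (d r)) (b : Fin (d s)) (i : Fin (d r)) (a : Fin (d s)) :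
    (∑ x : G, π r x * Matrix.single j b (1:ℂ) * π s x⁻¹) i a
      = ∑ x : G, (π r x) i j * (starRingEnd ℂ) ((π s x) a b) := by
  rw [Matrix.sum_apply]
  refine Finset.sum_congr rfl fun x _ => ?_
  have h1 : (π s x⁻¹) b a = (starRingEnd ℂ) ((π s x) a b) := by
    rw [← star_eq_inv hunit, Matrix.star_apply]
    rfl
  rw [Matrix.mul_apply]
  have h2 : ∀ q : Fin (d s), (π r x * Matrix.single j b (1:ℂ)) i q
      = if b = q then (π r x) i j else 0 := by
    intro q
    simp [Matrix.mul_apply, Matrix.single, ite_and, mul_ite]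
  simp only [h2, ite_mul, zero_mul]
  rw [Finset.sum_ite_eq Finset.univ b (fun q => (π r x) i j * (π s x⁻¹) q a)]
  simp [h1]

lemma schur_ne (hunit : ∀ r x, π r x ∈ Matrix.unitaryGroup (Fin (d r)) ℂ)
    (hneq : ∀ (r s : Fin k), r ≠ s → ∀ T : Matrix (Fin (d r)) (Fin (d s)) ℂ,
      (∀ x, π r x * T = T * π s x) → T = 0)
    {r s : Fin k} (hrs : r ≠ s) (i j : Fin (d r)) (a b : Fin (d s)) :
    ∑ x : G, (π r x) i j * (starRingEnd ℂ) ((π s x) a b) = 0 := by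
  have hA := hneq r s hrs (∑ x : G, π r x * Matrix.single j b (1:ℂ) * π s x⁻¹)
    (fun y => avg_intertwines r s _ y)
  have := congrFun (congrFun hA i) a
  rwa [avg_entry hunit] at this

lemma schur_eq (hdpos : ∀ r, 0 < d r)
    (hunit : ∀ r x, π r x ∈ Matrix.unitaryGroup (Fin (d r)) ℂ)
    (hirr : ∀ (r : Fin k) (M : Matrix (Fin (d r)) (Fin (d r)) ℂ),
      (∀ x, M * π r x = π r x * M) → ∃ c : ℂ, M = c • (1 : Matrix (Fin (d r)) (Fin (d r)) ℂ))
    (r : Fin k) (i j a b : Fin (d r)) :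
    ∑ x : G, (π r x) i j * (starRingEnd ℂ) ((π r x) a b)
      = if i = a ∧ j = b then (Fintype.card G : ℂ) / (d r : ℂ) else 0 := by
  set A := ∑ x : G, π r x * Matrix.single j b (1:ℂ) * π r x⁻¹ with hAdef
  obtain ⟨c, hc⟩ := hirr r A (fun y => (avg_intertwines r r _ y).symm)
  have htr : Matrix.trace A = (Fintype.card G : ℂ) * (if j = b then 1 else 0) := by
    rw [hAdef, Matrix.trace_sum]
    have : ∀ x : G, Matrix.trace (π r x * Matrix.single j b (1:ℂ) * π r x⁻¹)
        = (if j = b then 1 else 0) := by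
      intro x
      rw [Matrix.trace_mul_cycle, ← map_mul, inv_mul_cancel, map_one, one_mul]
      by_cases h : j = b
      · subst h; simp [Matrix.trace, Matrix.diag, Matrix.single]
      · have hz : ∀ i : Fin (d r), (Matrix.single j b (1:ℂ)) i i = 0 := by
          intro i
          simp only [Matrix.single, Matrix.of_apply]
          exact if_neg (fun hh => h (hh.1.trans hh.2.symm))
        simp [Matrix.trace, Matrix.diag, hz, h]
    simp [this, Finset.sum_const, mul_comm]
  have htr2 : Matrix.trace A = c * (d r : ℂ) := by
    rw [hc, Matrix.trace_smul, Matrix.trace_one]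
    simp [mul_comm]
  have hdne : (d r : ℂ) ≠ 0 := Nat.cast_ne_zero.mpr (hdpos r).ne'
  have hcval : c * (d r : ℂ) = (Fintype.card G : ℂ) * (if j = b then 1 else 0) := by
    rw [← htr2, htr]
  have hentry := avg_entry hunit r r j b i a
  rw [← hAdef] at hentry
  rw [← hentry, hc]
  simp only [Matrix.smul_apply, Matrix.one_apply, smul_eq_mul]
  by_cases hia : i = a
  · by_cases hjb : j = b
    · simp only [hia, hjb, and_self, if_true, mul_one]
      rw [eq_div_iff hdne]
      simpa [hjb] using hcval
    · have hc0 : c = 0 := by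
        have := hcval
        rw [if_neg hjb, mul_zero] at this
        exact (mul_eq_zero.mp this).resolve_right hdne
      simp [hia, hjb, hc0]
  · simp [hia]



variable {G : Type*} [Group G] [Fintype G] {k : ℕ} {d : Fin k → ℕ}
  {π : (r : Fin k) → G →* Matrix (Fin (d r)) (Fin (d r)) ℂ}

lemma conv_expand (hunit : ∀ r x, π r x ∈ Matrix.unitaryGroup (Fin (d r)) ℂ)
    (γ' : Fin k → ℂ) (g : G → ℂ) (x : G) :
    conv (gwavelet d π γ') g x
      = ∑ r : Fin k, ∑ i : Fin (d r), ∑ j : Fin (d r),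
          (Fintype.card G : ℂ)⁻¹ * (d r : ℂ) * γ' r * (π r x) i j
            * (∑ z : G, (starRingEnd ℂ) ((π r z) i j) * g z) := by
  have hstar : ∀ (r : Fin k) (z : G) (i j : Fin (d r)),
      (π r z⁻¹) j i = (starRingEnd ℂ) ((π r z) i j) := by
    intro r z i j
    rw [← star_eq_inv hunit, Matrix.star_apply]
    rfl
  rw [conv]
  simp only [gwavelet, Matrix.trace, Matrix.diag, Finset.sum_mul, Finset.mul_sum]
  rw [Finset.sum_comm]
  refine Finset.sum_congr rfl fun r _ => ?_
  rw [Finset.sum_comm]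
  refine Finset.sum_congr rfl fun i _ => ?_
  have hre : ∑ y : G, (Fintype.card G : ℂ)⁻¹ * ((d r : ℂ) * γ' r * (π r y) i i * g (y⁻¹ * x))
      = ∑ z : G, (Fintype.card G : ℂ)⁻¹ * ((d r : ℂ) * γ' r * (π r (x * z⁻¹)) i i * g z) := by
    refine Fintype.sum_equiv ((Equiv.inv G).trans (Equiv.mulRight x)) _ _ fun y => ?_
    have h1 : x * (y⁻¹ * x)⁻¹ = y := by group
    simp only [Equiv.trans_apply, Equiv.inv_apply, Equiv.coe_mulRight, h1]
  rw [hre]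
  conv_rhs => rw [Finset.sum_comm]
  refine Finset.sum_congr rfl fun z _ => ?_
  rw [map_mul, Matrix.mul_apply]
  simp only [hstar]
  simp only [Finset.mul_sum, Finset.sum_mul]
  refine Finset.sum_congr rfl fun j _ => ?_
  ring


lemma parseval_le (hdpos : ∀ r, 0 < d r)
    (hunit : ∀ r x, π r x ∈ Matrix.unitaryGroup (Fin (d r)) ℂ)
    (hirr : ∀ (r : Fin k) (M : Matrix (Fin (d r)) (Fin (d r)) ℂ),
      (∀ x, M * π r x = π r x * M) → ∃ c : ℂ, M = c • (1 : Matrix (Fin (d r)) (Fin (d r)) ℂ))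
    (hneq : ∀ (r s : Fin k), r ≠ s → ∀ T : Matrix (Fin (d r)) (Fin (d s)) ℂ,
      (∀ x, π r x * T = T * π s x) → T = 0)
    {J : ℕ} (γ : Fin (J + 1) → Fin k → ℂ)
    (hPar : ∀ r : Fin k, ∑ j : Fin (J + 1), Complex.normSq (γ j r) = 1)
    (g : G → ℂ) :
    ∑ j : Fin (J + 1), nsq (conv (gwavelet d π (γ j)) g) ≤ nsq g := by
  classical
  have hn0 : 0 < Fintype.card G := Fintype.card_pos
  have hnR : (0:ℝ) < (Fintype.card G : ℝ) := by exact_mod_cast hn0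
  set c : (r : Fin k) → Fin (d r) → Fin (d r) → ℂ :=
    fun r i j => ∑ z : G, (starRingEnd ℂ) ((π r z) i j) * g z with hcdef
  set sq : Fin k → ℂ := fun r => ((Real.sqrt (d r / Fintype.card G) : ℝ) : ℂ) with hsqdef
  have hsqsq : ∀ r, sq r * sq r = (d r : ℂ) / (Fintype.card G : ℂ) := by
    intro r
    rw [hsqdef, ← Complex.ofReal_mul, Real.mul_self_sqrt (by positivity)]
    push_cast
    ring
  set toE : (G → ℂ) → EuclideanSpace ℂ G := (fun h => (WithLp.equiv 2 (G → ℂ)).symm h) with htoE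
  have htoEx : ∀ (h : G → ℂ) (x : G), toE h x = h x := fun _ _ => rfl
  set e : ((r : Fin k) × (Fin (d r) × Fin (d r))) → EuclideanSpace ℂ G :=
    fun a => WithLp.toLp 2 (fun x => sq a.1 * (π a.1 x) a.2.1 a.2.2) with hedef
  -- orthonormality
  have honb : Orthonormal ℂ e := by
    rw [orthonormal_iff_ite]
    rintro ⟨r, i, j⟩ ⟨s, p, q⟩
    have hip : (inner ℂ (e ⟨r, (i, j)⟩) (e ⟨s, (p, q)⟩) : ℂ)
        = (starRingEnd ℂ) (sq r) * sq s * ∑ x : G, (π s x) p q * (starRingEnd ℂ) ((π r x) i j) := by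
      rw [PiLp.inner_apply]
      rw [Finset.mul_sum]
      refine Finset.sum_congr rfl fun x _ => ?_
      simp only [hedef, RCLike.inner_apply, map_mul]
      ring
    rcases eq_or_ne r s with rfl | hrs
    · rw [hip, schur_eq hdpos hunit hirr r p q i j]
      have hcj : (starRingEnd ℂ) (sq r) = sq r := by
        rw [hsqdef]; exact Complex.conj_ofReal _
      by_cases hh : p = i ∧ q = j
      · obtain ⟨rfl, rfl⟩ := hh
        rw [if_pos ⟨rfl, rfl⟩, if_pos rfl, hcj, hsqsq]
        have hd0 : (d r : ℂ) ≠ 0 := Nat.cast_ne_zero.mpr (hdpos r).ne'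
        have hn0' : (Fintype.card G : ℂ) ≠ 0 := Nat.cast_ne_zero.mpr hn0.ne'
        field_simp
      · rw [if_neg hh, mul_zero]
        rw [if_neg ?_]
        intro hco
        obtain ⟨h1, h2⟩ := Sigma.ext_iff.mp hco
        obtain ⟨h3, h4⟩ := Prod.ext_iff.mp (eq_of_heq h2)
        exact hh ⟨h3.symm, h4.symm⟩
    · rw [hip, schur_ne hunit hneq (Ne.symm hrs) p q i j, mul_zero]
      rw [if_neg ?_]
      intro hco
      exact hrs (congrArg Sigma.fst hco)
  -- expansion of convolutions
  have hexp : ∀ γ' : Fin k → ℂ,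
      toE (conv (gwavelet d π γ') g)
        = ∑ a : (r : Fin k) × (Fin (d r) × Fin (d r)),
            (γ' a.1 * sq a.1 * c a.1 a.2.1 a.2.2) • e a := by
    intro γ'
    refine (WithLp.linearEquiv 2 ℂ (G → ℂ)).injective ?_
    rw [map_sum]
    simp only [_root_.map_smul, WithLp.linearEquiv_apply]
    funext x
    rw [Finset.sum_apply]
    have hL : ∀ h : EuclideanSpace ℂ G, (WithLp.equiv 2 (G → ℂ)) h = (h : G → ℂ) := fun _ => rfl
    change conv (gwavelet d π γ') g x = _
    rw [conv_expand hunit γ' g x]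
    rw [← Finset.univ_sigma_univ, Finset.sum_sigma]
    refine Finset.sum_congr rfl fun r _ => ?_
    rw [Fintype.sum_prod_type]
    refine Finset.sum_congr rfl fun i _ => ?_
    refine Finset.sum_congr rfl fun j _ => ?_
    simp only [Pi.smul_apply, smul_eq_mul, hedef]
    change _ = _ * (sq r * (π r x) i j)
    linear_combination (-(γ' r * c r i j * (π r x) i j)) * hsqsq r
  have hsqconj : ∀ r, (starRingEnd ℂ) (sq r) = sq r := by
    intro r; rw [hsqdef]; exact Complex.conj_ofReal _
  have hsqR : ∀ r, Complex.normSq (sq r) = (d r : ℝ) / (Fintype.card G : ℝ) := by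
    intro r
    rw [hsqdef, Complex.normSq_ofReal, Real.mul_self_sqrt (by positivity)]
  have hnorm2 : ∀ h : EuclideanSpace ℂ G, ‖h‖^2 = ∑ x : G, Complex.normSq (h x) := by
    intro h
    rw [EuclideanSpace.norm_eq, Real.sq_sqrt (by positivity)]
    simp [Complex.sq_norm]
  have hcoord : ∀ γ' : Fin k → ℂ,
      ∑ x : G, Complex.normSq (conv (gwavelet d π γ') g x)
        = ∑ a : (r : Fin k) × (Fin (d r) × Fin (d r)),
            Complex.normSq (γ' a.1) * ((d a.1 : ℝ) / (Fintype.card G : ℝ))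
              * Complex.normSq (c a.1 a.2.1 a.2.2) := by
    intro γ'
    have h0 : ((∑ x : G, Complex.normSq (conv (gwavelet d π γ') g x) : ℝ) : ℂ)
        = (inner ℂ (toE (conv (gwavelet d π γ') g))
            (toE (conv (gwavelet d π γ') g)) : ℂ) := by
      rw [PiLp.inner_apply]
      push_cast
      refine Finset.sum_congr rfl fun x _ => ?_
      rw [RCLike.inner_apply, Complex.mul_conj, htoEx]
    have h1 : ((∑ x : G, Complex.normSq (conv (gwavelet d π γ') g x) : ℝ) : ℂ)
        = ((∑ a : (r : Fin k) × (Fin (d r) × Fin (d r)),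
            Complex.normSq (γ' a.1) * ((d a.1 : ℝ) / (Fintype.card G : ℝ))
              * Complex.normSq (c a.1 a.2.1 a.2.2) : ℝ) : ℂ) := by
      rw [h0, hexp γ', honb.inner_sum]
      push_cast
      refine Finset.sum_congr rfl fun a _ => ?_
      rw [mul_comm ((starRingEnd ℂ) (γ' a.1 * sq a.1 * c a.1 a.2.1 a.2.2)), Complex.mul_conj,
        Complex.normSq_mul, Complex.normSq_mul, hsqR]
      push_cast
      ring
    exact_mod_cast h1
  have hbes : ∑ a : (r : Fin k) × (Fin (d r) × Fin (d r)),
      ((d a.1 : ℝ) / (Fintype.card G : ℝ)) * Complex.normSq (c a.1 a.2.1 a.2.2)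
        ≤ ∑ x : G, Complex.normSq (g x) := by
    have h3 : ∀ a : (r : Fin k) × (Fin (d r) × Fin (d r)),
        (inner ℂ (e a) (toE g) : ℂ) = sq a.1 * c a.1 a.2.1 a.2.2 := by
      intro a
      rw [PiLp.inner_apply, hcdef, Finset.mul_sum]
      refine Finset.sum_congr rfl fun x _ => ?_
      simp only [RCLike.inner_apply, hedef, map_mul, hsqconj, htoEx]
      ring
    calc ∑ a : (r : Fin k) × (Fin (d r) × Fin (d r)),
        ((d a.1 : ℝ) / (Fintype.card G : ℝ)) * Complex.normSq (c a.1 a.2.1 a.2.2)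
        = ∑ a : (r : Fin k) × (Fin (d r) × Fin (d r)),
            ‖(inner ℂ (e a) (toE g) : ℂ)‖ ^ 2 := by
          refine Finset.sum_congr rfl fun a _ => ?_
          rw [h3 a, Complex.sq_norm, Complex.normSq_mul, hsqR]
      _ ≤ ‖toE g‖ ^ 2 := honb.sum_inner_products_le _
      _ = ∑ x : G, Complex.normSq (g x) := hnorm2 _
  have hfin : ∑ j : Fin (J + 1), nsq (conv (gwavelet d π (γ j)) g)
      = (Fintype.card G : ℝ)⁻¹ * ∑ a : (r : Fin k) × (Fin (d r) × Fin (d r)),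
          ((d a.1 : ℝ) / (Fintype.card G : ℝ)) * Complex.normSq (c a.1 a.2.1 a.2.2) := by
    have hstep : ∀ j : Fin (J + 1), nsq (conv (gwavelet d π (γ j)) g)
        = (Fintype.card G : ℝ)⁻¹ * ∑ a : (r : Fin k) × (Fin (d r) × Fin (d r)),
            Complex.normSq (γ j a.1) * ((d a.1 : ℝ) / (Fintype.card G : ℝ))
              * Complex.normSq (c a.1 a.2.1 a.2.2) := by
      intro j; rw [nsq, hcoord (γ j)]
    rw [Finset.sum_congr rfl fun j _ => hstep j, ← Finset.mul_sum]
    congr 1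
    rw [Finset.sum_comm]
    refine Finset.sum_congr rfl fun a _ => ?_
    rw [← Finset.sum_mul, ← Finset.sum_mul, hPar a.1, one_mul]
  rw [hfin, nsq]
  exact mul_le_mul_of_nonneg_left hbes (by positivity)

end SchurAux

section Scatter
variable {G : Type*} [Group G] [Fintype G]

lemma nsq_nonneg (f : G → ℂ) : 0 ≤ nsq f := by
  rw [nsq]
  exact mul_nonneg (by positivity) (Finset.sum_nonneg fun x _ => Complex.normSq_nonneg _)

lemma nsq_abs (h : G → ℂ) : nsq (fun x => ((‖h x‖ : ℝ) : ℂ)) = nsq h := by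
  rw [nsq, nsq]
  congr 1
  refine Finset.sum_congr rfl fun x _ => ?_
  rw [Complex.normSq_ofReal, ← Complex.sq_norm, sq]

lemma sum_pi_succ {J : ℕ} (F : List (Fin J) → ℝ) (m : ℕ) :
    ∑ p : Fin (m + 1) → Fin J, F (List.ofFn p)
      = ∑ j : Fin J, ∑ q : Fin m → Fin J, F (j :: List.ofFn q) := by
  have h := Fintype.sum_equiv (Fin.consEquiv (fun _ : Fin (m + 1) => Fin J)).symm
    (fun p => F (List.ofFn p)) (fun x => F (x.1 :: List.ofFn x.2)) ?_
  · rw [h, Fintype.sum_prod_type]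
  · intro p
    simp only [Fin.consEquiv, Equiv.coe_fn_symm_mk]
    rw [List.ofFn_succ]
    rfl

lemma scatter_aux {J : ℕ} (φ : G → ℂ) (ψ : Fin J → G → ℂ)
    (hstep : ∀ g : G → ℂ, nsq (conv φ g)
      + ∑ j : Fin J, nsq (fun x => ((‖conv (ψ j) g x‖ : ℝ) : ℂ)) ≤ nsq g) :
    ∀ (m : ℕ) (f : G → ℂ),
      (∑ i ∈ Finset.range m, ∑ p : Fin i → Fin J, nsq (conv φ (Upath ψ (List.ofFn p) f)))
        + ∑ p : Fin m → Fin J, nsq (Upath ψ (List.ofFn p) f) ≤ nsq f := by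
  intro m
  induction m with
  | zero =>
    intro f
    simp only [Finset.range_zero, Finset.sum_empty, zero_add]
    have h1 : ∀ p : Fin 0 → Fin J, Upath ψ (List.ofFn p) f = f := by
      intro p
      rw [List.ofFn_zero]
      rfl
    rw [Finset.sum_congr rfl fun p _ => congrArg nsq (h1 p)]
    rw [Finset.sum_const]
    have : Fintype.card (Fin 0 → Fin J) = 1 := by simp
    rw [Finset.card_univ, this, one_smul]
  | succ m ih =>
    intro f
    have key : ∀ j : Fin J,
        (∑ i ∈ Finset.range m, ∑ q : Fin i → Fin J,
            nsq (conv φ (Upath ψ (j :: List.ofFn q) f)))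
          + ∑ q : Fin m → Fin J, nsq (Upath ψ (j :: List.ofFn q) f)
          ≤ nsq (fun x => ((‖conv (ψ j) f x‖ : ℝ) : ℂ)) := by
      intro j
      exact ih _
    have h1 := Finset.sum_le_sum fun j (_ : j ∈ Finset.univ) => key j
    have h2 := hstep f
    have hS0 : ∑ p : Fin 0 → Fin J, nsq (conv φ (Upath ψ (List.ofFn p) f))
        = nsq (conv φ f) := by
      have h1' : ∀ p : Fin 0 → Fin J, Upath ψ (List.ofFn p) f = f := by
        intro p; rw [List.ofFn_zero]; rfl
      rw [Finset.sum_congr rfl fun p _ => congrArg nsq (congrArg (conv φ) (h1' p))]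
      rw [Finset.sum_const]
      have : Fintype.card (Fin 0 → Fin J) = 1 := by simp
      rw [Finset.card_univ, this, one_smul]
    have heq : (∑ i ∈ Finset.range (m + 1), ∑ p : Fin i → Fin J,
          nsq (conv φ (Upath ψ (List.ofFn p) f)))
        + ∑ p : Fin (m + 1) → Fin J, nsq (Upath ψ (List.ofFn p) f)
        = nsq (conv φ f)
          + ∑ j : Fin J,
            ((∑ i ∈ Finset.range m, ∑ q : Fin i → Fin J,
                nsq (conv φ (Upath ψ (j :: List.ofFn q) f)))
              + ∑ q : Fin m → Fin J, nsq (Upath ψ (j :: List.ofFn q) f)) := by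
      rw [Finset.sum_range_succ', hS0]
      rw [Finset.sum_congr rfl fun i (_ : i ∈ Finset.range m) =>
        sum_pi_succ (fun l => nsq (conv φ (Upath ψ l f))) i]
      rw [sum_pi_succ (fun l => nsq (Upath ψ l f)) m]
      rw [Finset.sum_add_distrib, Finset.sum_comm]
      ring
    rw [heq]
    calc nsq (conv φ f) + ∑ j : Fin J, _ ≤ nsq (conv φ f)
          + ∑ j : Fin J, nsq (fun x => ((‖conv (ψ j) f x‖ : ℝ) : ℂ)) := by
            exact add_le_add_right h1 _
      _ ≤ nsq f := h2

end Scatter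

theorem stmt10 {G : Type*} [Group G] [Fintype G]
    {k : ℕ} (d : Fin k → ℕ) (hdpos : ∀ r, 0 < d r)
    (π : (r : Fin k) → G →* Matrix (Fin (d r)) (Fin (d r)) ℂ)
    (hunit : ∀ r x, π r x ∈ Matrix.unitaryGroup (Fin (d r)) ℂ)
    (hirr : ∀ (r : Fin k) (M : Matrix (Fin (d r)) (Fin (d r)) ℂ),
      (∀ x, M * π r x = π r x * M) → ∃ c : ℂ, M = c • (1 : Matrix (Fin (d r)) (Fin (d r)) ℂ))
    (hneq : ∀ (r s : Fin k), r ≠ s → ∀ T : Matrix (Fin (d r)) (Fin (d s)) ℂ,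
      (∀ x, π r x * T = T * π s x) → T = 0)
    (hcard : Nat.card (ConjClasses G) = k)
    {J : ℕ} (γ : Fin (J + 1) → Fin k → ℂ)
    (hPar : ∀ r : Fin k, ∑ j : Fin (J + 1), Complex.normSq (γ j r) = 1)
    (f : G → ℂ) :
    ∑' m : ℕ, ∑ p : Fin m → Fin J, nsq (Sop d π γ (List.ofFn p) f) ≤ nsq f := by
  classical
  have hstep : ∀ g : G → ℂ,
      nsq (conv (gwavelet d π (γ 0)) g)
        + ∑ j : Fin J, nsq (fun x => ((‖conv (gwavelet d π (γ j.succ)) g x‖ : ℝ) : ℂ))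
        ≤ nsq g := by
    intro g
    have h := parseval_le hdpos hunit hirr hneq γ hPar g
    rw [Fin.sum_univ_succ] at h
    refine le_trans (le_of_eq ?_) h
    congr 1
    exact Finset.sum_congr rfl fun j _ => nsq_abs _
  have haux := scatter_aux (gwavelet d π (γ 0)) (fun j => gwavelet d π (γ j.succ)) hstep
  refine Real.tsum_le_of_sum_range_le
    (fun m => Finset.sum_nonneg fun p _ => nsq_nonneg _) (fun M => ?_)
  have h1 := haux M f
  have h2 : 0 ≤ ∑ p : Fin M → Fin J,
      nsq (Upath (fun j => gwavelet d π (γ j.succ)) (List.ofFn p) f) :=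
    Finset.sum_nonneg fun p _ => nsq_nonneg _
  have h3 : ∑ m ∈ Finset.range M, ∑ p : Fin m → Fin J, nsq (Sop d π γ (List.ofFn p) f)
      = ∑ m ∈ Finset.range M, ∑ p : Fin m → Fin J,
          nsq (conv (gwavelet d π (γ 0))
            (Upath (fun j => gwavelet d π (γ j.succ)) (List.ofFn p) f)) := rfl
  linarith
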